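/- In the rejection sampling setup (contexts S ~ P_S, actions A|S ~ π_b, rewards R|(S,A) ~ P_R, uniform V independent of everything, acceptance event {V ≤ w(S,A)/B} with w = π_e/π_b ≤ B), the conditional distribution of (S, R) given acceptance has density P^{π_e}(s, r) = P_S(s) ∫ P_R(r|s,a) π_e(a|s) da. -/

import Mathlib

open MeasureTheory ProbabilityTheory
open scoped ENNReal

private lemma lintegral_ofReal_eq_one' {α : Type*} [MeasurableSpace α] {m : Measure α}
    {f : α → ℝ} (hnn : ∀ x, 0 ≤ f x) (h1 : ∫ x, f x ∂m = 1) :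
    ∫⁻ x, ENNReal.ofReal (f x) ∂m = 1 := by
  have hint : Integrable f m := by
    by_contra h
    rw [integral_undef h] at h1
    exact one_ne_zero h1.symm
  rw [← ofReal_integral_eq_lintegral_ofReal hint (Filter.Eventually.of_forall hnn), h1,
    ENNReal.ofReal_one]

/-- Rejection sampling: if the joint law of `((S,A),R)` has density
`π_b(a|s) P_R(r|s,a)` w.r.t. `(P_S × ν) × Leb`, `V ~ U([0,1])` is independent of
`((S,A),R)`, and acceptance means `V ≤ w(S,A)/B` with `w = π_e/π_b ≤ B`, then the
conditional law of `(S,R)` given acceptance has density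
`P^{π_e}(s,r) = ∫ P_R(r|s,a) π_e(a|s) da` w.r.t. `P_S × Leb`. -/
theorem stmt_12 {𝒮 𝒜 Ω : Type*} [MeasurableSpace 𝒮] [MeasurableSpace 𝒜] [MeasurableSpace Ω]
    (μ : Measure Ω) [IsProbabilityMeasure μ]
    (μS : Measure 𝒮) [IsProbabilityMeasure μS] (ν : Measure 𝒜) [SigmaFinite ν]
    (πb πe : 𝒮 → 𝒜 → ℝ) (PR : 𝒮 → 𝒜 → ℝ → ℝ)
    (hπbmeas : Measurable (fun p : 𝒮 × 𝒜 => πb p.1 p.2))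
    (hπemeas : Measurable (fun p : 𝒮 × 𝒜 => πe p.1 p.2))
    (hPRmeas : Measurable (fun p : (𝒮 × 𝒜) × ℝ => PR p.1.1 p.1.2 p.2))
    (hπbnn : ∀ s a, 0 ≤ πb s a) (hπenn : ∀ s a, 0 ≤ πe s a)
    (hPRnn : ∀ s a r, 0 ≤ PR s a r)
    (hπb1 : ∀ s, ∫ a, πb s a ∂ν = 1) (hπe1 : ∀ s, ∫ a, πe s a ∂ν = 1)
    (hPR1 : ∀ s a, ∫ r, PR s a r = 1)
    (B : ℝ) (hB : 0 < B) (hdom : ∀ s a, πe s a ≤ B * πb s a)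
    (S : Ω → 𝒮) (A : Ω → 𝒜) (R : Ω → ℝ) (V : Ω → ℝ)
    (hS : Measurable S) (hA : Measurable A) (hR : Measurable R) (hV : Measurable V)
    (hlaw : μ.map (fun ω => ((S ω, A ω), R ω))
      = ((μS.prod ν).prod (volume : Measure ℝ)).withDensity
          (fun p => ENNReal.ofReal (πb p.1.1 p.1.2 * PR p.1.1 p.1.2 p.2)))
    (hunif : μ.map V = (volume : Measure ℝ).restrict (Set.Icc 0 1))
    (hindep : IndepFun (fun ω => ((S ω, A ω), R ω)) V μ) :
    (μ[|{ω | V ω ≤ (πe (S ω) (A ω) / πb (S ω) (A ω)) / B}]).map (fun ω => (S ω, R ω))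
      = (μS.prod (volume : Measure ℝ)).withDensity
          (fun p => ENNReal.ofReal (∫ a, PR p.1 a p.2 * πe p.1 a ∂ν)) := by
  classical
  have hB0 : ENNReal.ofReal B ≠ 0 := by
    simp [ENNReal.ofReal_eq_zero, not_le, hB]
  have hBtop : ENNReal.ofReal B ≠ ⊤ := ENNReal.ofReal_ne_top
  -- shorthand
  set base : Measure ((𝒮 × 𝒜) × ℝ) := (μS.prod ν).prod (volume : Measure ℝ) with hbase_def
  set w : 𝒮 × 𝒜 → ℝ := fun q => πe q.1 q.2 / πb q.1 q.2 / B with hw_def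
  set X : Ω → (𝒮 × 𝒜) × ℝ := fun ω => ((S ω, A ω), R ω) with hX_def
  set E : Set Ω := {ω | V ω ≤ (πe (S ω) (A ω) / πb (S ω) (A ω)) / B} with hE_def
  set g : 𝒮 × ℝ → ℝ≥0∞ := fun p => ∫⁻ a, ENNReal.ofReal (PR p.1 a p.2 * πe p.1 a) ∂ν
    with hg_def
  -- basic measurability
  have hwmeas : Measurable w := (hπemeas.div hπbmeas).div_const B
  have hXmeas : Measurable X := (hS.prodMk hA).prodMk hR
  have hEmeas : MeasurableSet E := measurableSet_le hV (hwmeas.comp (hS.prodMk hA))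
  have hFmeas : Measurable fun x : (𝒮 × 𝒜) × ℝ =>
      ENNReal.ofReal (PR x.1.1 x.1.2 x.2 * πe x.1.1 x.1.2) :=
    (hPRmeas.mul (hπemeas.comp measurable_fst)).ennreal_ofReal
  have hgmeas : Measurable g := by
    have : Measurable fun q : (𝒮 × ℝ) × 𝒜 =>
        ENNReal.ofReal (PR q.1.1 q.2 q.1.2 * πe q.1.1 q.2) := by
      have hmap : Measurable fun q : (𝒮 × ℝ) × 𝒜 => ((q.1.1, q.2), q.1.2) :=
        (measurable_fst.fst.prodMk measurable_snd).prodMk measurable_fst.snd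
      exact hFmeas.comp hmap
    exact this.lintegral_prod_right'
  -- pointwise facts
  have hπe0 : ∀ s a, πb s a = 0 → πe s a = 0 := by
    intro s a h
    exact le_antisymm (by simpa [h] using hdom s a) (hπenn s a)
  have hw0 : ∀ q : 𝒮 × 𝒜, 0 ≤ w q :=
    fun q => div_nonneg (div_nonneg (hπenn _ _) (hπbnn _ _)) hB.le
  have hw1 : ∀ q : 𝒮 × 𝒜, w q ≤ 1 := by
    intro q
    rcases (hπbnn q.1 q.2).eq_or_lt with h | h
    · simp [hw_def, ← h, div_zero, zero_div, zero_le_one]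
    · exact (div_le_one hB).mpr ((div_le_iff₀ h).mpr (by linarith [hdom q.1 q.2]))
  have hreal : ∀ s a r, πb s a * PR s a r * (πe s a / πb s a / B)
      = PR s a r * πe s a / B := by
    intro s a r
    rcases (hπbnn s a).eq_or_lt with h | h
    · simp [← h, hπe0 s a h.symm]
    · field_simp
  -- uniform measure of Iic
  have hunifIic : ∀ t : ℝ, 0 ≤ t → t ≤ 1 →
      (volume : Measure ℝ).restrict (Set.Icc 0 1) (Set.Iic t) = ENNReal.ofReal t := by
    intro t h0 h1
    rw [Measure.restrict_apply measurableSet_Iic]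
    have : Set.Iic t ∩ Set.Icc (0:ℝ) 1 = Set.Icc 0 t := by
      ext v
      simp only [Set.mem_inter_iff, Set.mem_Iic, Set.mem_Icc]
      constructor
      · rintro ⟨hv, hv0, _⟩; exact ⟨hv0, hv⟩
      · rintro ⟨hv0, hv⟩; exact ⟨hv, hv0, le_trans hv h1⟩
    rw [this, Real.volume_Icc, sub_zero]
  -- joint law
  have hjoint : μ.map (fun ω => (X ω, V ω)) = (μ.map X).prod (μ.map V) :=
    (indepFun_iff_map_prod_eq_prod_map_map hXmeas.aemeasurable hV.aemeasurable).mp hindep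
  -- the key computation
  have key : ∀ T : Set (𝒮 × ℝ), MeasurableSet T →
      μ (E ∩ (fun ω => (S ω, R ω)) ⁻¹' T)
        = (∫⁻ p in T, g p ∂(μS.prod (volume : Measure ℝ))) / ENNReal.ofReal B := by
    intro T hT
    set T' : Set ((𝒮 × 𝒜) × ℝ) := (fun x : (𝒮 × 𝒜) × ℝ => (x.1.1, x.2)) ⁻¹' T with hT'_def
    have hT' : MeasurableSet T' := (measurable_fst.fst.prodMk measurable_snd) hT
    set D : Set (((𝒮 × 𝒜) × ℝ) × ℝ) := {q | q.1 ∈ T' ∧ q.2 ≤ w q.1.1} with hD_def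
    have hD : MeasurableSet D :=
      (measurable_fst hT').inter
        (measurableSet_le measurable_snd (hwmeas.comp measurable_fst.fst))
    have hset : E ∩ (fun ω => (S ω, R ω)) ⁻¹' T = (fun ω => (X ω, V ω)) ⁻¹' D := by
      ext ω
      simp only [hE_def, hX_def, hD_def, hT'_def, Set.mem_inter_iff, Set.mem_setOf_eq,
        Set.mem_preimage, hw_def]
      tauto
    rw [hset, ← Measure.map_apply (hXmeas.prodMk hV) hD, hjoint, hlaw, hunif,
      Measure.prod_apply hD]
    -- inner measure as indicator
    have hinner : ∀ x : (𝒮 × 𝒜) × ℝ,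
        (volume : Measure ℝ).restrict (Set.Icc 0 1) (Prod.mk x ⁻¹' D)
          = T'.indicator (fun x => ENNReal.ofReal (w x.1)) x := by
      intro x
      by_cases hx : x ∈ T'
      · have : Prod.mk x ⁻¹' D = Set.Iic (w x.1) := by
          ext v; simp [hD_def, hx, Set.mem_Iic]
        rw [this, hunifIic _ (hw0 x.1) (hw1 x.1), Set.indicator_of_mem hx]
      · have : Prod.mk x ⁻¹' D = ∅ := by
          ext v; simp [hD_def, hx]
        rw [this, Set.indicator_of_notMem hx]
        simp
    simp_rw [hinner]
    rw [lintegral_indicator hT']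
    have hm1 : Measurable fun p : (𝒮 × 𝒜) × ℝ =>
        ENNReal.ofReal (πb p.1.1 p.1.2 * PR p.1.1 p.1.2 p.2) :=
      ((hπbmeas.comp measurable_fst).mul hPRmeas).ennreal_ofReal
    have hm2 : Measurable fun x : (𝒮 × 𝒜) × ℝ => ENNReal.ofReal (w x.1) :=
      (hwmeas.comp measurable_fst).ennreal_ofReal
    rw [restrict_withDensity hT', lintegral_withDensity_eq_lintegral_mul _ hm1 hm2]
    simp only [Pi.mul_apply]
    have hpt : ∀ x : (𝒮 × 𝒜) × ℝ,
        ENNReal.ofReal (πb x.1.1 x.1.2 * PR x.1.1 x.1.2 x.2) * ENNReal.ofReal (w x.1)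
        = ENNReal.ofReal (PR x.1.1 x.1.2 x.2 * πe x.1.1 x.1.2) * (ENNReal.ofReal B)⁻¹ := by
      intro x
      have h1 : 0 ≤ πb x.1.1 x.1.2 * PR x.1.1 x.1.2 x.2 :=
        mul_nonneg (hπbnn _ _) (hPRnn _ _ _)
      rw [← ENNReal.ofReal_mul h1, hw_def, hreal, div_eq_mul_inv,
        ENNReal.ofReal_mul (mul_nonneg (hPRnn _ _ _) (hπenn _ _)),
        ENNReal.ofReal_inv_of_pos hB]
    simp_rw [hpt]
    rw [lintegral_mul_const'' _ (hFmeas.aemeasurable.restrict), div_eq_mul_inv]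
    · -- Tonelli / Fubini rearrangement
      have tonelli : ∫⁻ x in T', ENNReal.ofReal (PR x.1.1 x.1.2 x.2 * πe x.1.1 x.1.2) ∂base
          = ∫⁻ p in T, g p ∂(μS.prod (volume : Measure ℝ)) := by
        have hIT : Measurable (T.indicator (1 : 𝒮 × ℝ → ℝ≥0∞)) :=
          measurable_one.indicator hT
        have hH : Measurable fun x : (𝒮 × 𝒜) × ℝ =>
            T.indicator (1 : 𝒮 × ℝ → ℝ≥0∞) (x.1.1, x.2)
              * ENNReal.ofReal (PR x.1.1 x.1.2 x.2 * πe x.1.1 x.1.2) :=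
          (hIT.comp (measurable_fst.fst.prodMk measurable_snd)).mul hFmeas
        rw [← lintegral_indicator hT', ← lintegral_indicator hT]
        have hind : ∀ x : (𝒮 × 𝒜) × ℝ,
            T'.indicator (fun x : (𝒮 × 𝒜) × ℝ =>
              ENNReal.ofReal (PR x.1.1 x.1.2 x.2 * πe x.1.1 x.1.2)) x
              = T.indicator (1 : 𝒮 × ℝ → ℝ≥0∞) (x.1.1, x.2)
                * ENNReal.ofReal (PR x.1.1 x.1.2 x.2 * πe x.1.1 x.1.2) := by
          intro x
          by_cases hx : (x.1.1, x.2) ∈ T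
          · have hx' : x ∈ T' := hx
            rw [Set.indicator_of_mem hx', Set.indicator_of_mem hx, Pi.one_apply, one_mul]
          · have hx' : x ∉ T' := hx
            rw [Set.indicator_of_notMem hx', Set.indicator_of_notMem hx, zero_mul]
        simp_rw [hind]
        rw [hbase_def, lintegral_prod _ hH.aemeasurable]
        have hH2 : Measurable fun sa : 𝒮 × 𝒜 => ∫⁻ r,
            T.indicator (1 : 𝒮 × ℝ → ℝ≥0∞) (sa.1, r)
              * ENNReal.ofReal (PR sa.1 sa.2 r * πe sa.1 sa.2) ∂(volume : Measure ℝ) :=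
          hH.lintegral_prod_right'
        rw [lintegral_prod _ hH2.aemeasurable]
        -- now swap the inner two integrals for each fixed s
        have hswap : ∀ s : 𝒮, (∫⁻ a, ∫⁻ r,
            T.indicator (1 : 𝒮 × ℝ → ℝ≥0∞) (s, r)
              * ENNReal.ofReal (PR s a r * πe s a) ∂(volume : Measure ℝ) ∂ν)
            = ∫⁻ r, ∫⁻ a, T.indicator (1 : 𝒮 × ℝ → ℝ≥0∞) (s, r)
              * ENNReal.ofReal (PR s a r * πe s a) ∂ν ∂(volume : Measure ℝ) := by
          intro s
          apply lintegral_lintegral_swap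
          have : Measurable fun q : 𝒜 × ℝ =>
              T.indicator (1 : 𝒮 × ℝ → ℝ≥0∞) (s, q.2)
                * ENNReal.ofReal (PR s q.1 q.2 * πe s q.1) := by
            have hmap : Measurable fun q : 𝒜 × ℝ => (((s, q.1), q.2) : (𝒮 × 𝒜) × ℝ) :=
              ((measurable_const.prodMk measurable_fst).prodMk measurable_snd)
            exact hH.comp hmap
          exact this.aemeasurable
        simp_rw [hswap]
        -- right-hand side
        have hRHS : ∀ p : 𝒮 × ℝ, T.indicator g p
            = ∫⁻ a, T.indicator (1 : 𝒮 × ℝ → ℝ≥0∞) p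
                * ENNReal.ofReal (PR p.1 a p.2 * πe p.1 a) ∂ν := by
          intro p
          have hma : Measurable fun a : 𝒜 =>
              ENNReal.ofReal (PR p.1 a p.2 * πe p.1 a) := by
            have hmap : Measurable fun a : 𝒜 => (((p.1, a), p.2) : (𝒮 × 𝒜) × ℝ) :=
              (measurable_const.prodMk measurable_id).prodMk measurable_const
            exact hFmeas.comp hmap
          rw [lintegral_const_mul _ hma]
          by_cases hp : p ∈ T
          · rw [Set.indicator_of_mem hp, Set.indicator_of_mem hp, Pi.one_apply, one_mul]
          · rw [Set.indicator_of_notMem hp, Set.indicator_of_notMem hp, zero_mul]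
        simp_rw [hRHS]
        have hH3 : Measurable fun p : 𝒮 × ℝ => ∫⁻ a,
            T.indicator (1 : 𝒮 × ℝ → ℝ≥0∞) p
              * ENNReal.ofReal (PR p.1 a p.2 * πe p.1 a) ∂ν := by
          have : Measurable fun q : (𝒮 × ℝ) × 𝒜 =>
              T.indicator (1 : 𝒮 × ℝ → ℝ≥0∞) q.1
                * ENNReal.ofReal (PR q.1.1 q.2 q.1.2 * πe q.1.1 q.2) := by
            have hmap : Measurable fun q : (𝒮 × ℝ) × 𝒜 => ((q.1.1, q.2), q.1.2) :=
              (measurable_fst.fst.prodMk measurable_snd).prodMk measurable_fst.snd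
            exact (hIT.comp measurable_fst).mul (hFmeas.comp hmap)
          exact this.lintegral_prod_right'
        rw [lintegral_prod _ hH3.aemeasurable]
      rw [tonelli]
  -- total mass
  have hlintPR : ∀ s a, ∫⁻ r, ENNReal.ofReal (PR s a r) ∂(volume : Measure ℝ) = 1 :=
    fun s a => lintegral_ofReal_eq_one' (hPRnn s a) (hPR1 s a)
  have hlintπe : ∀ s, ∫⁻ a, ENNReal.ofReal (πe s a) ∂ν = 1 :=
    fun s => lintegral_ofReal_eq_one' (hπenn s) (hπe1 s)
  have total : ∫⁻ p, g p ∂(μS.prod (volume : Measure ℝ)) = 1 := by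
    rw [lintegral_prod _ hgmeas.aemeasurable]
    have hs1 : ∀ s : 𝒮, ∫⁻ r, g (s, r) ∂(volume : Measure ℝ) = 1 := by
      intro s
      have hmswap : AEMeasurable (Function.uncurry fun (r : ℝ) (a : 𝒜) =>
          ENNReal.ofReal (PR s a r * πe s a)) ((volume : Measure ℝ).prod ν) := by
        have hmap : Measurable fun q : ℝ × 𝒜 => (((s, q.2), q.1) : (𝒮 × 𝒜) × ℝ) :=
          ((measurable_const.prodMk measurable_snd).prodMk measurable_fst)
        exact (hFmeas.comp hmap).aemeasurable
      have := lintegral_lintegral_swap hmswap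
      simp only [hg_def]
      rw [this]
      have : ∀ a : 𝒜, (∫⁻ r, ENNReal.ofReal (PR s a r * πe s a) ∂(volume : Measure ℝ))
          = ENNReal.ofReal (πe s a) := by
        intro a
        have : ∀ r, ENNReal.ofReal (PR s a r * πe s a)
            = ENNReal.ofReal (PR s a r) * ENNReal.ofReal (πe s a) := fun r =>
          ENNReal.ofReal_mul (hPRnn s a r)
        simp_rw [this]
        have hma : Measurable fun r => ENNReal.ofReal (PR s a r) := by
          have hmap : Measurable fun r : ℝ => (((s, a), r) : (𝒮 × 𝒜) × ℝ) :=
            measurable_const.prodMk measurable_id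
          exact ((hPRmeas.comp hmap)).ennreal_ofReal
        rw [lintegral_mul_const _ hma, hlintPR s a, one_mul]
      simp_rw [this]
      exact hlintπe s
    simp_rw [hs1]
    simp
  -- measure of the acceptance event
  have hμE : μ E = (ENNReal.ofReal B)⁻¹ := by
    have h := key Set.univ MeasurableSet.univ
    simpa [Measure.restrict_univ, total, ENNReal.div_eq_inv_mul] using h
  -- conclude
  have main : (μ[|E]).map (fun ω => (S ω, R ω))
      = (μS.prod (volume : Measure ℝ)).withDensity g := by
    refine Measure.ext fun T hT => ?_
    rw [Measure.map_apply (hS.prodMk hR) hT, cond_apply hEmeas, key T hT, hμE, inv_inv,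
      withDensity_apply _ hT, ENNReal.mul_div_cancel hB0 hBtop]
  rw [main]
  -- the two densities agree a.e.
  refine withDensity_congr_ae ?_
  have hfin : ∀ᵐ p ∂(μS.prod (volume : Measure ℝ)), g p < ⊤ :=
    ae_lt_top hgmeas (by rw [total]; exact ENNReal.one_ne_top)
  filter_upwards [hfin] with p hp
  simp only [hg_def]
  have hma : Measurable fun a : 𝒜 => PR p.1 a p.2 * πe p.1 a := by
    have hmap : Measurable fun a : 𝒜 => (((p.1, a), p.2) : (𝒮 × 𝒜) × ℝ) :=
      (measurable_const.prodMk measurable_id).prodMk measurable_const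
    exact (hPRmeas.comp hmap).mul ((hπemeas.comp (measurable_const.prodMk measurable_id)))
  have hnn : ∀ a, 0 ≤ PR p.1 a p.2 * πe p.1 a := fun a =>
    mul_nonneg (hPRnn _ _ _) (hπenn _ _)
  have hint : Integrable (fun a => PR p.1 a p.2 * πe p.1 a) ν := by
    refine ⟨hma.aestronglyMeasurable, ?_⟩
    rw [HasFiniteIntegral]
    have : ∀ a, ‖PR p.1 a p.2 * πe p.1 a‖ₑ
        = ENNReal.ofReal (PR p.1 a p.2 * πe p.1 a) := fun a =>
      Real.enorm_eq_ofReal (hnn a)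
    simp_rw [this]
    exact hp
  rw [← ofReal_integral_eq_lintegral_ofReal hint (Filter.Eventually.of_forall hnn)]
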